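/- Let ℏ > 0 and ω > 0. Define A : ℝ × ℝ² → ℝ by A(β,p,q) = (1/cosh(ωℏβ/2))·exp(−(tanh(ωℏβ/2)/ℏ)·(p² + q²)). Then A(0,p,q) = 1 for all (p,q) ∈ ℝ², and for all β ∈ ℝ and (p,q) ∈ ℝ², ∂_βA(β,p,q) = −(ω/2)(p² + q²)·A(β,p,q) + (ℏ²ω/8)·(∂_p²A(β,p,q) + ∂_q²A(β,p,q)). -/

import Mathlib

lemma gauss_hasDeriv (a k s : ℝ) (x : ℝ) :
    HasDerivAt (fun x => a * Real.exp (-k * (x ^ 2 + s)))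
      (a * Real.exp (-k * (x ^ 2 + s)) * (-k * (2 * x))) x := by
  have hx2 : HasDerivAt (fun x : ℝ => x ^ 2 + s) (2 * x) x := by
    simpa using (hasDerivAt_pow 2 x).add_const s
  have hin : HasDerivAt (fun x : ℝ => -k * (x ^ 2 + s)) (-k * (2 * x)) x := hx2.const_mul (-k)
  have := (hin.exp).const_mul a
  rw [mul_assoc]
  exact this

lemma gauss_second (a k s : ℝ) (x : ℝ) :
    iteratedDeriv 2 (fun x => a * Real.exp (-k * (x ^ 2 + s))) x
      = a * Real.exp (-k * (x ^ 2 + s)) * (4 * k ^ 2 * x ^ 2 - 2 * k) := by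
  rw [iteratedDeriv_succ, iteratedDeriv_one]
  have h1 : deriv (fun x => a * Real.exp (-k * (x ^ 2 + s)))
      = fun x => a * Real.exp (-k * (x ^ 2 + s)) * (-k * (2 * x)) :=
    funext fun y => (gauss_hasDeriv a k s y).deriv
  rw [h1]
  have h2 : HasDerivAt (fun x => a * Real.exp (-k * (x ^ 2 + s)) * (-k * (2 * x)))
      (a * Real.exp (-k * (x ^ 2 + s)) * (-k * (2 * x)) * (-k * (2 * x))
        + a * Real.exp (-k * (x ^ 2 + s)) * (-k * 2)) x := by
    have hlin : HasDerivAt (fun x : ℝ => -k * (2 * x)) (-k * 2) x := by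
      simpa using ((hasDerivAt_id x).const_mul 2).const_mul (-k)
    exact (gauss_hasDeriv a k s x).mul hlin
  rw [h2.deriv]
  ring



/-- The Mehler-type function
`A(β,p,q) = sech(ωℏβ/2)·exp(−(tanh(ωℏβ/2)/ℏ)(p²+q²))`
satisfies `A(0,p,q) = 1` and the Moyal heat equation
`∂_βA = −(ω/2)(p²+q²)A + (ℏ²ω/8)(∂_p²A + ∂_q²A)`. -/
theorem stmt15 (hbar ω : ℝ) (hhbar : 0 < hbar) (hω : 0 < ω)
    (A : ℝ → ℝ → ℝ → ℝ)
    (hA : ∀ β p q, A β p q =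
      (1 / Real.cosh (ω * hbar * β / 2)) *
        Real.exp (-(Real.tanh (ω * hbar * β / 2) / hbar) * (p ^ 2 + q ^ 2))) :
    (∀ p q : ℝ, A 0 p q = 1) ∧
    ∀ (β p q : ℝ),
      deriv (fun β' => A β' p q) β =
        -(ω / 2) * (p ^ 2 + q ^ 2) * A β p q
          + hbar ^ 2 * ω / 8 *
            (iteratedDeriv 2 (fun p' => A β p' q) p + iteratedDeriv 2 (fun q' => A β p q') q) := by
  constructor
  · intro p q
    rw [hA]
    simp
  · intro β p q
    have hne : Real.cosh (ω * hbar * β / 2) ≠ 0 := (Real.cosh_pos _).ne'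
    simp only [hA, Real.tanh_eq_sinh_div_cosh, one_div]
    -- second derivatives in p and q
    set ch := Real.cosh (ω * hbar * β / 2) with hch
    set sh := Real.sinh (ω * hbar * β / 2) with hsh
    have hp2 : iteratedDeriv 2
        (fun p' => ch⁻¹ * Real.exp (-(sh / ch / hbar) * (p' ^ 2 + q ^ 2))) p
        = ch⁻¹ * Real.exp (-(sh / ch / hbar) * (p ^ 2 + q ^ 2)) *
            (4 * (sh / ch / hbar) ^ 2 * p ^ 2 - 2 * (sh / ch / hbar)) :=
      gauss_second _ _ _ _
    have hqcomm : (fun q' => ch⁻¹ * Real.exp (-(sh / ch / hbar) * (p ^ 2 + q' ^ 2)))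
        = fun q' => ch⁻¹ * Real.exp (-(sh / ch / hbar) * (q' ^ 2 + p ^ 2)) := by
      funext y; rw [add_comm (p ^ 2)]
    have hq2 : iteratedDeriv 2
        (fun q' => ch⁻¹ * Real.exp (-(sh / ch / hbar) * (p ^ 2 + q' ^ 2))) q
        = ch⁻¹ * Real.exp (-(sh / ch / hbar) * (q ^ 2 + p ^ 2)) *
            (4 * (sh / ch / hbar) ^ 2 * q ^ 2 - 2 * (sh / ch / hbar)) := by
      rw [hqcomm]; exact gauss_second _ _ _ _
    rw [hp2, hq2]
    -- beta derivative
    have hu : HasDerivAt (fun β' : ℝ => ω * hbar * β' / 2) (ω * hbar / 2) β := by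
      simpa using ((hasDerivAt_id β).const_mul (ω * hbar)).div_const 2
    have hcosh : HasDerivAt (fun β' => Real.cosh (ω * hbar * β' / 2)) (sh * (ω * hbar / 2)) β :=
      (Real.hasDerivAt_cosh _).comp β hu
    have hsinh : HasDerivAt (fun β' => Real.sinh (ω * hbar * β' / 2)) (ch * (ω * hbar / 2)) β :=
      (Real.hasDerivAt_sinh _).comp β hu
    have hinv : HasDerivAt (fun β' => (Real.cosh (ω * hbar * β' / 2))⁻¹)
        (-(sh * (ω * hbar / 2)) / ch ^ 2) β := hcosh.inv hne
    have htanh : HasDerivAt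
        (fun β' => Real.sinh (ω * hbar * β' / 2) / Real.cosh (ω * hbar * β' / 2))
        ((ch * (ω * hbar / 2) * ch - sh * (sh * (ω * hbar / 2))) / ch ^ 2) β :=
      hsinh.div hcosh hne
    have hin : HasDerivAt
        (fun β' => -(Real.sinh (ω * hbar * β' / 2) / Real.cosh (ω * hbar * β' / 2) / hbar)
            * (p ^ 2 + q ^ 2))
        (-((ch * (ω * hbar / 2) * ch - sh * (sh * (ω * hbar / 2))) / ch ^ 2 / hbar)
            * (p ^ 2 + q ^ 2)) β :=
      ((htanh.div_const hbar).neg).mul_const _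
    have hF : HasDerivAt
        (fun β' => (Real.cosh (ω * hbar * β' / 2))⁻¹ *
          Real.exp (-(Real.sinh (ω * hbar * β' / 2) / Real.cosh (ω * hbar * β' / 2) / hbar)
            * (p ^ 2 + q ^ 2)))
        ((-(sh * (ω * hbar / 2)) / ch ^ 2) *
            Real.exp (-(sh / ch / hbar) * (p ^ 2 + q ^ 2))
          + ch⁻¹ * (Real.exp (-(sh / ch / hbar) * (p ^ 2 + q ^ 2)) *
              (-((ch * (ω * hbar / 2) * ch - sh * (sh * (ω * hbar / 2))) / ch ^ 2 / hbar)
                * (p ^ 2 + q ^ 2)))) β :=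
      hinv.mul hin.exp
    rw [hF.deriv]
    rw [add_comm (p ^ 2) (q ^ 2)] -- align exp args? may fail; remove if error
    field_simp
    ring
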